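/- The pseudo-Riemannian metric on ℝ³ given by G = [[p, 0, pφ²],[0, -p, -pφ¹],[pφ², -pφ¹, r - p(φ¹)² + p(φ²)²]] (with p, r nonzero real constants) has vanishing Riemann curvature tensor. -/

import Mathlib

open scoped BigOperators

/-- Partial derivative in the `i`-th coordinate direction on `ℝ³`. -/
noncomputable def pd (i : Fin 3) (f : (Fin 3 → ℝ) → ℝ) (x : Fin 3 → ℝ) : ℝ :=
  fderiv ℝ f x (Pi.single i 1)

/-- Christoffel symbols `Γ^k_{ij}` of the Levi-Civita connection of the metric `g`. -/
noncomputable def christoffel (g : (Fin 3 → ℝ) → Matrix (Fin 3) (Fin 3) ℝ)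
    (k i j : Fin 3) (x : Fin 3 → ℝ) : ℝ :=
  (1/2) * ∑ l, (g x)⁻¹ k l *
    (pd i (fun y => g y l j) x + pd j (fun y => g y l i) x - pd l (fun y => g y i j) x)

/-- Riemann curvature tensor `R^l_{kij}`. -/
noncomputable def riemann (g : (Fin 3 → ℝ) → Matrix (Fin 3) (Fin 3) ℝ)
    (l k i j : Fin 3) (x : Fin 3 → ℝ) : ℝ :=
  pd i (fun y => christoffel g l j k y) x - pd j (fun y => christoffel g l i k y) x
    + ∑ m, (christoffel g l i m x * christoffel g m j k x
        - christoffel g l j m x * christoffel g m i k x)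

/-- Ricci tensor `R_{jk} = R^i_{jik}`. -/
noncomputable def ricci (g : (Fin 3 → ℝ) → Matrix (Fin 3) (Fin 3) ℝ)
    (j k : Fin 3) (x : Fin 3 → ℝ) : ℝ :=
  ∑ i, riemann g i j i k x

/-- Scalar curvature `R = g^{jk} R_{jk}`. -/
noncomputable def scalarCurv (g : (Fin 3 → ℝ) → Matrix (Fin 3) (Fin 3) ℝ)
    (x : Fin 3 → ℝ) : ℝ :=
  ∑ j, ∑ k, (g x)⁻¹ j k * ricci g j k x

/-- The metric of the sigma model coming from the decomposition (6₀|1). -/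
noncomputable def metric601 (p r : ℝ) (x : Fin 3 → ℝ) : Matrix (Fin 3) (Fin 3) ℝ :=
  !![p, 0, p * x 1;
     0, -p, -p * x 0;
     p * x 1, -p * x 0, r - p * (x 0)^2 + p * (x 1)^2]

noncomputable def ginv601 (p r : ℝ) (x : Fin 3 → ℝ) : Matrix (Fin 3) (Fin 3) ℝ :=
  !![(r + p * (x 1)^2)/(p*r), x 0 * x 1 / r, -(x 1)/r;
     x 0 * x 1 / r, -(r - p * (x 0)^2)/(p*r), -(x 0)/r;
     -(x 1)/r, -(x 0)/r, 1/r]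

lemma inv601 (p r : ℝ) (hp : p ≠ 0) (hr : r ≠ 0) (x : Fin 3 → ℝ) :
    (metric601 p r x)⁻¹ = ginv601 p r x := by
  apply Matrix.inv_eq_right_inv
  ext i j
  fin_cases i <;> fin_cases j <;>
    simp [metric601, ginv601, Matrix.mul_apply, Fin.sum_univ_three] <;>
    field_simp <;> ring

lemma hasFDerivAt_proj (m : Fin 3) (x : Fin 3 → ℝ) :
    HasFDerivAt (fun y : Fin 3 → ℝ => y m)
      (ContinuousLinearMap.proj (R := ℝ) (φ := fun _ : Fin 3 => ℝ) m) x :=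
  (ContinuousLinearMap.proj (R := ℝ) (φ := fun _ : Fin 3 => ℝ) m).hasFDerivAt

lemma pd_poly (a b c d e : ℝ) (i : Fin 3) (x : Fin 3 → ℝ) :
    pd i (fun y => a + b * y 0 + c * y 1 + d * (y 0)^2 + e * (y 1)^2) x
      = (b + d * (2 * x 0)) * (if (0:Fin 3) = i then 1 else 0)
        + (c + e * (2 * x 1)) * (if (1:Fin 3) = i then 1 else 0) := by
  have h0 := hasFDerivAt_proj 0 x
  have h1 := hasFDerivAt_proj 1 x
  have H : HasFDerivAt (fun y : Fin 3 → ℝ => a + b * y 0 + c * y 1 + d * (y 0)^2 + e * (y 1)^2)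
      ((b + d * (2 * x 0)) • (ContinuousLinearMap.proj 0 : (Fin 3 → ℝ) →L[ℝ] ℝ)
        + (c + e * (2 * x 1)) • (ContinuousLinearMap.proj 1 : (Fin 3 → ℝ) →L[ℝ] ℝ)) x := by
    have h2 := ((((h0.const_mul b).const_add a).add (h1.const_mul c)).add
        ((h0.mul h0).const_mul d)).add ((h1.mul h1).const_mul e)
    have hfun : (fun y : Fin 3 → ℝ => a + b * y 0 + c * y 1 + d * (y 0)^2 + e * (y 1)^2)
        = fun y : Fin 3 → ℝ => a + b * y 0 + (c * y 1) + d * (y 0 * y 0) + e * (y 1 * y 1) := by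
      funext y; ring
    rw [hfun]
    refine h2.congr_fderiv ?_
    ext y
    simp [ContinuousLinearMap.proj_apply]
    ring
  rw [pd, H.fderiv]
  simp [Pi.single_apply]

/-- constant coefficient matrices of the metric entries -/
noncomputable def Am (p r : ℝ) : Fin 3 → Fin 3 → ℝ := fun l j =>
  if l = 0 ∧ j = 0 then p else if l = 1 ∧ j = 1 then -p else if l = 2 ∧ j = 2 then r else 0
noncomputable def Bm (p : ℝ) : Fin 3 → Fin 3 → ℝ := fun l j =>
  if l = 1 ∧ j = 2 ∨ l = 2 ∧ j = 1 then -p else 0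
noncomputable def Cm (p : ℝ) : Fin 3 → Fin 3 → ℝ := fun l j =>
  if l = 0 ∧ j = 2 ∨ l = 2 ∧ j = 0 then p else 0
noncomputable def Dm (p : ℝ) : Fin 3 → Fin 3 → ℝ := fun l j => if l = 2 ∧ j = 2 then -p else 0
noncomputable def Em (p : ℝ) : Fin 3 → Fin 3 → ℝ := fun l j => if l = 2 ∧ j = 2 then p else 0

lemma metric_poly (p r : ℝ) (l j : Fin 3) :
    (fun y : Fin 3 → ℝ => metric601 p r y l j)
      = fun y => Am p r l j + Bm p l j * y 0 + Cm p l j * y 1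
          + Dm p l j * (y 0)^2 + Em p l j * (y 1)^2 := by
  funext y
  fin_cases l <;> fin_cases j <;> norm_num [metric601, Am, Bm, Cm, Dm, Em, Fin.ext_iff] <;> ring

lemma pd_metric (p r : ℝ) (i l j : Fin 3) (x : Fin 3 → ℝ) :
    pd i (fun y => metric601 p r y l j) x
      = (Bm p l j + Dm p l j * (2 * x 0)) * (if (0:Fin 3) = i then 1 else 0)
        + (Cm p l j + Em p l j * (2 * x 1)) * (if (1:Fin 3) = i then 1 else 0) := by
  rw [metric_poly p r l j]; exact pd_poly _ _ _ _ _ i x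

noncomputable def gA (k i j : Fin 3) : ℝ :=
  if k = 0 ∧ (i = 1 ∧ j = 2 ∨ i = 2 ∧ j = 1) ∨ k = 1 ∧ (i = 0 ∧ j = 2 ∨ i = 2 ∧ j = 0)
  then 1 else 0
noncomputable def gB (k i j : Fin 3) : ℝ := if k = 0 ∧ i = 2 ∧ j = 2 then 1 else 0
noncomputable def gC (k i j : Fin 3) : ℝ := if k = 1 ∧ i = 2 ∧ j = 2 then 1 else 0

noncomputable def Γv (k i j : Fin 3) (x : Fin 3 → ℝ) : ℝ :=
  gA k i j + gB k i j * x 0 + gC k i j * x 1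

set_option maxHeartbeats 1600000 in
lemma chris601 (p r : ℝ) (hp : p ≠ 0) (hr : r ≠ 0) (k i j : Fin 3) (x : Fin 3 → ℝ) :
    christoffel (metric601 p r) k i j x = Γv k i j x := by
  rw [christoffel, inv601 p r hp hr]
  fin_cases k <;> fin_cases i <;> fin_cases j <;>
  · simp only [Fin.sum_univ_three, pd_metric, ginv601, Γv, gA, gB, gC,
      Am, Bm, Cm, Dm, Em, Fin.isValue, Matrix.cons_val', Matrix.cons_val_zero,
      Matrix.cons_val_one, Matrix.head_cons, Matrix.head_fin_const, Matrix.cons_val_fin_one,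
      Matrix.empty_val', Matrix.cons_val_two, Matrix.tail_cons, Matrix.vecHead, Matrix.vecTail, Matrix.of_apply]
    norm_num [Fin.ext_iff]
    try field_simp
    try ring

lemma pd_Γv (k i j m : Fin 3) (x : Fin 3 → ℝ) :
    pd m (fun y => Γv k i j y) x
      = gB k i j * (if (0:Fin 3) = m then 1 else 0)
        + gC k i j * (if (1:Fin 3) = m then 1 else 0) := by
  have h : (fun y : Fin 3 → ℝ => Γv k i j y)
      = fun y => gA k i j + gB k i j * y 0 + gC k i j * y 1
          + 0 * (y 0)^2 + 0 * (y 1)^2 := by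
    funext y; simp [Γv]
  rw [h]
  have := pd_poly (gA k i j) (gB k i j) (gC k i j) 0 0 m x
  simpa using this

set_option maxHeartbeats 1600000 in
/-- the metric of the (6₀|1) sigma model is flat. -/
theorem riemann_metric601_eq_zero (p r : ℝ) (hp : p ≠ 0) (hr : r ≠ 0) :
    ∀ (l k i j : Fin 3) (x : Fin 3 → ℝ), riemann (metric601 p r) l k i j x = 0 := by
  intro l k i j x
  have hc : ∀ a b c : Fin 3, (fun y => christoffel (metric601 p r) a b c y)
      = fun y => Γv a b c y := fun a b c => funext (chris601 p r hp hr a b c)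
  rw [riemann, hc, hc]
  simp only [chris601 p r hp hr, pd_Γv, Fin.sum_univ_three]
  fin_cases l <;> fin_cases k <;> fin_cases i <;> fin_cases j <;>
    norm_num [Γv, gA, gB, gC, Fin.ext_iff] <;> ring
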